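/- Let k be a natural number, u = 2^k, and let P be a nonempty finite set of points in [0,u) × [0,u) (integer coordinates). Suppose P can be covered by c sets C_1, ..., C_c (not necessarily disjoint), where each C_i is contained in some axis-aligned square of side ℓ_i with 1 ≤ ℓ_i ≤ u (i.e., C_i ⊆ [a_i, a_i + ℓ_i) × [b_i, b_i + ℓ_i) for some integers a_i, b_i). Then the quadtree node count of P is at most Σ_{i=1}^{c} ( |C_i| · ⌈log₂ ℓ_i⌉ + 4·(k+1) ). -/

import Mathlib

/-- The quadtree node count of a finite point set `P` on a `2^k × 2^k` grid:
the number of triples `(d, i, j)` with `d ≤ k` such that `(i, j)` is the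
depth-`d` dyadic square containing some point of `P`. -/
def quadNodes (k : ℕ) (P : Finset (ℕ × ℕ)) : ℕ :=
  ((Finset.range (k + 1)).biUnion fun d =>
    P.image fun p => (d, p.1 / 2 ^ (k - d), p.2 / 2 ^ (k - d))).card

/-- If a point set lies in an `ℓ × ℓ` box with `ℓ ≤ s`, then its image under
coordinatewise division by `s` takes at most 4 values. -/
lemma four_bound (s : ℕ) (hs : 0 < s) (ℓ : ℕ) (hls : ℓ ≤ s) (a b : ℤ) (d : ℕ)
    (S : Finset (ℕ × ℕ))
    (hsq : ∀ p ∈ S, a ≤ (p.1 : ℤ) ∧ (p.1 : ℤ) < a + ℓ ∧ b ≤ (p.2 : ℤ) ∧ (p.2 : ℤ) < b + ℓ) :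
    (S.image fun p => (d, p.1 / s, p.2 / s)).card ≤ 4 := by
  set q1 := a.toNat / s with hq1
  set q2 := b.toNat / s with hq2
  have hls' : (ℓ : ℤ) ≤ (s : ℤ) := by exact_mod_cast hls
  have key : ∀ p ∈ S, (p.1 / s = q1 ∨ p.1 / s = q1 + 1) ∧
      (p.2 / s = q2 ∨ p.2 / s = q2 + 1) := by
    intro p hp
    obtain ⟨h1, h2, h3, h4⟩ := hsq p hp
    have e1 : a.toNat ≤ p.1 := Int.toNat_le.mpr h1
    have e2 : p.1 ≤ a.toNat + s := by
      have h := Int.self_le_toNat a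
      have : (p.1 : ℤ) ≤ (a.toNat : ℤ) + s := by omega
      exact_mod_cast this
    have e3 : b.toNat ≤ p.2 := Int.toNat_le.mpr h3
    have e4 : p.2 ≤ b.toNat + s := by
      have h := Int.self_le_toNat b
      have : (p.2 : ℤ) ≤ (b.toNat : ℤ) + s := by omega
      exact_mod_cast this
    have f1 : q1 ≤ p.1 / s := Nat.div_le_div_right e1
    have f2 : p.1 / s ≤ q1 + 1 := by
      have := Nat.div_le_div_right (c := s) e2
      rwa [Nat.add_div_right _ hs] at this
    have f3 : q2 ≤ p.2 / s := Nat.div_le_div_right e3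
    have f4 : p.2 / s ≤ q2 + 1 := by
      have := Nat.div_le_div_right (c := s) e4
      rwa [Nat.add_div_right _ hs] at this
    exact ⟨by omega, by omega⟩
  have hsub : S.image (fun p => (d, p.1 / s, p.2 / s)) ⊆
      {(d, q1, q2), (d, q1, q2 + 1), (d, q1 + 1, q2), (d, q1 + 1, q2 + 1)} := by
    intro x hx
    simp only [Finset.mem_image] at hx
    obtain ⟨p, hp, rfl⟩ := hx
    obtain ⟨hx1, hx2⟩ := key p hp
    simp only [Finset.mem_insert, Finset.mem_singleton, Prod.mk.injEq]
    rcases hx1 with h | h <;> rcases hx2 with h' | h' <;> simp [h, h']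
  refine (Finset.card_le_card hsub).trans ?_
  calc ({(d, q1, q2), (d, q1, q2 + 1), (d, q1 + 1, q2), (d, q1 + 1, q2 + 1)} :
        Finset (ℕ × ℕ × ℕ)).card
      ≤ ({(d, q1, q2 + 1), (d, q1 + 1, q2), (d, q1 + 1, q2 + 1)} :
        Finset (ℕ × ℕ × ℕ)).card + 1 := Finset.card_insert_le _ _
    _ ≤ (({(d, q1 + 1, q2), (d, q1 + 1, q2 + 1)} :
        Finset (ℕ × ℕ × ℕ)).card + 1) + 1 :=
        Nat.add_le_add_right (Finset.card_insert_le _ _) 1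
    _ ≤ ((({(d, q1 + 1, q2 + 1)} : Finset (ℕ × ℕ × ℕ)).card + 1) + 1) + 1 :=
        Nat.add_le_add_right (Nat.add_le_add_right (Finset.card_insert_le _ _) 1) 1
    _ = 4 := by simp

/-- Bound for a single cluster contained in an `ℓ × ℓ` box. -/
lemma per_cluster (k : ℕ) (S : Finset (ℕ × ℕ)) (ℓ : ℕ) (a b : ℤ)
    (h1 : 1 ≤ ℓ) (h2 : ℓ ≤ 2 ^ k)
    (hsq : ∀ p ∈ S, a ≤ (p.1 : ℤ) ∧ (p.1 : ℤ) < a + ℓ ∧ b ≤ (p.2 : ℤ) ∧ (p.2 : ℤ) < b + ℓ) :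
    ((Finset.range (k + 1)).biUnion fun d =>
      S.image fun p => (d, p.1 / 2 ^ (k - d), p.2 / 2 ^ (k - d))).card
      ≤ S.card * Nat.clog 2 ℓ + 4 * (k + 1) := by
  classical
  set L := Nat.clog 2 ℓ with hL
  refine Finset.card_biUnion_le.trans ?_
  have step : ∀ d ∈ Finset.range (k + 1),
      (S.image fun p => (d, p.1 / 2 ^ (k - d), p.2 / 2 ^ (k - d))).card
        ≤ if 2 ^ (k - d) < ℓ then S.card else 4 := by
    intro d _
    split_ifs with h
    · exact Finset.card_image_le
    · exact four_bound (2 ^ (k - d)) (Nat.pow_pos (by norm_num)) ℓ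
        (not_lt.mp h) a b d S hsq
  refine (Finset.sum_le_sum step).trans ?_
  rw [Finset.sum_ite]
  simp only [Finset.sum_const, smul_eq_mul]
  have hc1 : ((Finset.range (k + 1)).filter fun d => 2 ^ (k - d) < ℓ).card ≤ L := by
    refine (Finset.card_le_card (t := Finset.Ico (k + 1 - L) (k + 1)) ?_).trans ?_
    · intro d hd
      simp only [Finset.mem_filter, Finset.mem_range] at hd
      have hnot : ¬ (ℓ ≤ 2 ^ (k - d)) := not_le.mpr hd.2
      rw [← Nat.clog_le_iff_le_pow (by norm_num)] at hnot
      simp only [Finset.mem_Ico]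
      omega
    · rw [Nat.card_Ico]
      omega
  have hc2 : ((Finset.range (k + 1)).filter fun d => ¬ 2 ^ (k - d) < ℓ).card ≤ k + 1 := by
    refine (Finset.card_filter_le _ _).trans ?_
    simp
  calc _ ≤ L * S.card + (k + 1) * 4 :=
        add_le_add (Nat.mul_le_mul_right _ hc1) (Nat.mul_le_mul_right _ hc2)
    _ = S.card * L + 4 * (k + 1) := by ring

theorem quadtree_space_bound (k : ℕ) (u : ℕ) (hu : u = 2 ^ k)
    (P : Finset (ℕ × ℕ)) (hP : P.Nonempty)
    (hPgrid : ∀ p ∈ P, p.1 < u ∧ p.2 < u)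
    (c : ℕ) (C : Fin c → Finset (ℕ × ℕ)) (ℓ : Fin c → ℕ) (a b : Fin c → ℤ)
    (hℓ : ∀ i, 1 ≤ ℓ i ∧ ℓ i ≤ u)
    (hCP : ∀ i, C i ⊆ P)
    (hcover : ∀ p ∈ P, ∃ i, p ∈ C i)
    (hsq : ∀ i, ∀ p ∈ C i,
      a i ≤ (p.1 : ℤ) ∧ (p.1 : ℤ) < a i + ℓ i ∧
      b i ≤ (p.2 : ℤ) ∧ (p.2 : ℤ) < b i + ℓ i) :
    quadNodes k P ≤ ∑ i, ((C i).card * Nat.clog 2 (ℓ i) + 4 * (k + 1)) := by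
  classical
  subst hu
  unfold quadNodes
  have hsub : ((Finset.range (k + 1)).biUnion fun d =>
      P.image fun p => (d, p.1 / 2 ^ (k - d), p.2 / 2 ^ (k - d))) ⊆
      Finset.univ.biUnion fun i : Fin c =>
        (Finset.range (k + 1)).biUnion fun d =>
          (C i).image fun p => (d, p.1 / 2 ^ (k - d), p.2 / 2 ^ (k - d)) := by
    intro x hx
    simp only [Finset.mem_biUnion, Finset.mem_image, Finset.mem_range,
      Finset.mem_univ] at hx ⊢
    obtain ⟨d, hd, p, hp, rfl⟩ := hx
    obtain ⟨i, hi⟩ := hcover p hp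
    exact ⟨i, trivial, d, hd, p, hi, rfl⟩
  refine (Finset.card_le_card hsub).trans ?_
  refine Finset.card_biUnion_le.trans ?_
  refine Finset.sum_le_sum fun i _ => ?_
  exact per_cluster k (C i) (ℓ i) (a i) (b i) (hℓ i).1 (hℓ i).2 (hsq i)
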